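/- Let n, s ≥ 1 and t be integers with 0 ≤ t ≤ s + 1, and let Q = K_t ∨ (K_{2k_1+1} ∪ ... ∪ K_{2k_q+1}) be the join of a clique of size t with a disjoint union of odd cliques, where k_1 ≥ k_2 ≥ ... ≥ k_q ≥ 0 and t + k_1 + ... + k_q = s + 1 and |V(Q)| = n. Then e(Q) ≤ e(K_t ∨ (K_{2s+3−2t} ∪ complement(K_{n−2s−3+t}))) = C(n,2) − C(n−t,2) + C(2s+3−2t,2). -/

import Mathlib

open SimpleGraph

/-- `M` is a matching in `G`: a set of edges of `G`, pairwise vertex-disjoint. -/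
def IsMatchingOn {V : Type*} (G : SimpleGraph V) (M : Set (Sym2 V)) : Prop :=
  M ⊆ G.edgeSet ∧ M.Pairwise fun e f => ∀ v, v ∈ e → v ∉ f

/-- The matching number of `G`. -/
noncomputable def matchNum {V : Type*} (G : SimpleGraph V) : ℕ :=
  sSup {k | ∃ M : Finset (Sym2 V), IsMatchingOn G ↑M ∧ M.card = k}

/-- The graph `K_t ∨ (K_a ∪ complement (K_(n-t-a)))` on vertex set `Fin n`. -/
def joinGraph (t a n : ℕ) : SimpleGraph (Fin n) where
  Adj i j := i ≠ j ∧ ((i : ℕ) < t ∨ (j : ℕ) < t ∨ ((i : ℕ) < t + a ∧ (j : ℕ) < t + a))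
  symm := ⟨fun i j h => ⟨h.1.symm, by tauto⟩⟩
  loopless := ⟨fun i h => h.1 rfl⟩

/-- The graph `K_t ∨ (K_(2k₁+1) ∪ ⋯ ∪ K_(2k_q+1))`. -/
def Qgraph (t q : ℕ) (k : Fin q → ℕ) :
    SimpleGraph (Fin t ⊕ Σ i : Fin q, Fin (2 * k i + 1)) where
  Adj u v := u ≠ v ∧
    (Sum.elim (fun _ => (none : Option (Fin q))) (fun p => some p.1) u = none ∨
     Sum.elim (fun _ => (none : Option (Fin q))) (fun p => some p.1) v = none ∨
     Sum.elim (fun _ => (none : Option (Fin q))) (fun p => some p.1) u =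
       Sum.elim (fun _ => (none : Option (Fin q))) (fun p => some p.1) v)
  symm := ⟨fun u v h => ⟨h.1.symm, by tauto⟩⟩
  loopless := ⟨fun u h => h.1 rfl⟩

namespace StmtAux

open Finset

instance (t a n : ℕ) : DecidableRel (joinGraph t a n).Adj :=
  fun i j => inferInstanceAs (Decidable (_ ∧ _))

instance (t q : ℕ) (k : Fin q → ℕ) : DecidableRel (Qgraph t q k).Adj :=
  fun u v => inferInstanceAs (Decidable (_ ∧ _))

lemma card_filter_fin (n : ℕ) (p : ℕ → Prop) [DecidablePred p] :
    #(univ.filter fun j : Fin n => p j) = #((range n).filter p) := by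
  rw [← Finset.card_image_of_injective _ Fin.val_injective]
  congr 1
  ext j
  simp only [mem_image, mem_filter, mem_univ, true_and, mem_range]
  constructor
  · rintro ⟨i, hi, rfl⟩; exact ⟨i.isLt, hi⟩
  · rintro ⟨hj, hp⟩; exact ⟨⟨j, hj⟩, hp, rfl⟩

lemma join_deg (t a n : ℕ) (i : Fin n) :
    (joinGraph t a n).degree i =
      if (i : ℕ) < t then n - 1 else if (i : ℕ) < t + a then min (t + a) n - 1 else t := by
  classical
  rw [degree, neighborFinset_eq_filter]
  have : ∀ j : Fin n, (joinGraph t a n).Adj i j ↔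
      ((j : ℕ) ≠ (i : ℕ) ∧ ((i : ℕ) < t ∨ (j : ℕ) < t ∨ ((i : ℕ) < t + a ∧ (j : ℕ) < t + a))) := by
    intro j
    show (i ≠ j ∧ _) ↔ _
    simp only [ne_eq, ← Fin.val_eq_val]
    tauto
  rw [Finset.filter_congr (fun j _ => by rw [this j]),
    card_filter_fin n (fun j => j ≠ (i:ℕ) ∧ ((i:ℕ) < t ∨ j < t ∨ ((i:ℕ) < t+a ∧ j < t+a)))]
  by_cases h1 : (i : ℕ) < t
  · rw [if_pos h1]
    have : ((range n).filter fun j => (j ≠ (i:ℕ) ∧ ((i:ℕ) < t ∨ j < t ∨ ((i:ℕ) < t+a ∧ j < t+a))))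
        = (range n).erase (i : ℕ) := by
      ext j; simp only [mem_filter, mem_range, mem_erase]; constructor
      · rintro ⟨hj, hne, _⟩; exact ⟨hne, hj⟩
      · rintro ⟨hne, hj⟩; exact ⟨hj, hne, Or.inl h1⟩
    rw [this, card_erase_of_mem (by simp [i.isLt]), card_range]
  · rw [if_neg h1]
    by_cases h2 : (i : ℕ) < t + a
    · rw [if_pos h2]
      have : ((range n).filter fun j => (j ≠ (i:ℕ) ∧ ((i:ℕ) < t ∨ j < t ∨ ((i:ℕ) < t+a ∧ j < t+a))))
          = (range (min (t+a) n)).erase (i : ℕ) := by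
        ext j; simp only [mem_filter, mem_range, mem_erase, lt_min_iff]; constructor
        · rintro ⟨hj, hne, hc⟩; exact ⟨hne, by omega, hj⟩
        · rintro ⟨hne, hj1, hj2⟩; exact ⟨hj2, hne, by omega⟩
      rw [this, card_erase_of_mem (by simp [i.isLt, h2]), card_range]
    · rw [if_neg h2]
      have : ((range n).filter fun j => (j ≠ (i:ℕ) ∧ ((i:ℕ) < t ∨ j < t ∨ ((i:ℕ) < t+a ∧ j < t+a))))
          = range (min t n) := by
        ext j; simp only [mem_filter, mem_range, lt_min_iff]; constructor
        · rintro ⟨hj, hne, hc⟩; exact ⟨by omega, hj⟩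
        · rintro ⟨hj1, hj2⟩; exact ⟨hj2, by omega, by omega⟩
      rw [this, card_range]
      omega

lemma join_count (t a n : ℕ) (htn : t ≤ n) :
    2 * #(joinGraph t a n).edgeFinset =
      t * (n - 1) + (min (t + a) n - t) * (min (t + a) n - 1) + (n - min (t + a) n) * t := by
  classical
  set M := min (t + a) n with hM
  have hMle : M ≤ n := by omega
  have htM : t ≤ M := by omega
  rw [← sum_degrees_eq_twice_card_edges]
  have : ∀ i : Fin n, (joinGraph t a n).degree i =
      (fun j : ℕ => if j < t then n - 1 else if j < t + a then M - 1 else t) (i : ℕ) := by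
    intro i; exact join_deg t a n i
  rw [Finset.sum_congr rfl (fun i _ => this i),
    Fin.sum_univ_eq_sum_range (fun j : ℕ => if j < t then n - 1 else if j < t + a then M - 1 else t) n]
  rw [Finset.range_eq_Ico, ← Finset.sum_Ico_consecutive _ (Nat.zero_le t) htn,
    ← Finset.sum_Ico_consecutive _ htM hMle]
  have h1 : ∑ j ∈ Finset.Ico 0 t, (if j < t then n - 1 else if j < t + a then M - 1 else t)
      = t * (n - 1) := by
    have hc : ∀ j ∈ Finset.Ico 0 t,
        (if j < t then n - 1 else if j < t + a then M - 1 else t) = n - 1 := by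
      intro j hj; rw [Finset.mem_Ico] at hj; rw [if_pos hj.2]
    rw [Finset.sum_congr rfl hc, Finset.sum_const, Nat.card_Ico, smul_eq_mul, Nat.sub_zero]
  have h2 : ∑ j ∈ Finset.Ico t M, (if j < t then n - 1 else if j < t + a then M - 1 else t)
      = (M - t) * (M - 1) := by
    have hc : ∀ j ∈ Finset.Ico t M,
        (if j < t then n - 1 else if j < t + a then M - 1 else t) = M - 1 := by
      intro j hj; rw [Finset.mem_Ico] at hj; rw [if_neg (by omega), if_pos (by omega)]
    rw [Finset.sum_congr rfl hc, Finset.sum_const, Nat.card_Ico, smul_eq_mul]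
  have h3 : ∑ j ∈ Finset.Ico M n, (if j < t then n - 1 else if j < t + a then M - 1 else t)
      = (n - M) * t := by
    have hc : ∀ j ∈ Finset.Ico M n,
        (if j < t then n - 1 else if j < t + a then M - 1 else t) = t := by
      intro j hj; rw [Finset.mem_Ico] at hj; rw [if_neg (by omega), if_neg (by omega)]
    rw [Finset.sum_congr rfl hc, Finset.sum_const, Nat.card_Ico, smul_eq_mul]
  rw [h1, h2, h3, add_assoc]

lemma Qgraph_adj (t q : ℕ) (k : Fin q → ℕ) (u v : Fin t ⊕ Σ i : Fin q, Fin (2 * k i + 1)) :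
    (Qgraph t q k).Adj u v ↔ u ≠ v ∧
    (Sum.elim (fun _ => (none : Option (Fin q))) (fun p => some p.1) u = none ∨
     Sum.elim (fun _ => (none : Option (Fin q))) (fun p => some p.1) v = none ∨
     Sum.elim (fun _ => (none : Option (Fin q))) (fun p => some p.1) u =
       Sum.elim (fun _ => (none : Option (Fin q))) (fun p => some p.1) v) := Iff.rfl

lemma Q_deg_inl (t q : ℕ) (k : Fin q → ℕ) (a : Fin t) :
    (Qgraph t q k).degree (Sum.inl a) = (t + ∑ i, (2 * k i + 1)) - 1 := by
  classical
  rw [degree, neighborFinset_eq_filter]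
  have : (univ.filter ((Qgraph t q k).Adj (Sum.inl a))) = univ.erase (Sum.inl a) := by
    ext u
    simp only [mem_filter, mem_univ, true_and, mem_erase, Qgraph_adj]
    constructor
    · rintro ⟨h, -⟩; exact ⟨fun e => h e.symm, trivial⟩
    · rintro ⟨h, -⟩; exact ⟨fun e => h e.symm, Or.inl rfl⟩
  rw [this, card_erase_of_mem (mem_univ _), card_univ]
  simp [Fintype.card_sum, Fintype.card_sigma]

lemma Q_deg_inr (t q : ℕ) (k : Fin q → ℕ) (i : Fin q) (x : Fin (2 * k i + 1)) :
    (Qgraph t q k).degree (Sum.inr ⟨i, x⟩) = t + 2 * k i := by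
  classical
  rw [degree, neighborFinset_eq_filter, card_filter]
  rw [Fintype.sum_sum_type]
  have h1 : ∀ b : Fin t, (if (Qgraph t q k).Adj (Sum.inr ⟨i, x⟩) (Sum.inl b) then 1 else 0) = 1 := by
    intro b
    rw [if_pos]
    exact ⟨by simp, Or.inr (Or.inl rfl)⟩
  have h2 : (∑ p : Σ j : Fin q, Fin (2 * k j + 1),
      if (Qgraph t q k).Adj (Sum.inr ⟨i, x⟩) (Sum.inr p) then 1 else 0) = 2 * k i := by
    rw [← Finset.univ_sigma_univ, Finset.sum_sigma]
    rw [Finset.sum_eq_single i ?h1 (by simp)]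
    · have hc : ∀ y ∈ (univ : Finset (Fin (2 * k i + 1))),
          (if (Qgraph t q k).Adj (Sum.inr ⟨i, x⟩) (Sum.inr ⟨i, y⟩) then 1 else 0)
          = if y ≠ x then 1 else 0 := by
        intro y _
        by_cases hyx : y = x
        · subst hyx
          rw [if_neg (fun h => (Qgraph t q k).loopless.irrefl _ h), if_neg (by simp)]
        · rw [if_pos ⟨fun e => by injection e with h; exact hyx (sigma_mk_injective h).symm,
            Or.inr (Or.inr rfl)⟩, if_pos hyx]
      rw [Finset.sum_congr rfl hc, ← Finset.card_filter, Finset.filter_ne' , 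
        card_erase_of_mem (mem_univ _), card_univ, Fintype.card_fin]
      omega
    · intro j _ hj
      apply Finset.sum_eq_zero
      intro y _
      rw [if_neg]
      rw [Qgraph_adj]
      simp only [Sum.elim_inr, reduceCtorEq, false_or, not_and, not_or]
      intro _
      exact fun e => hj (Option.some_injective _ e).symm
  rw [Finset.sum_congr rfl (fun b _ => h1 b), Finset.sum_const, h2]
  simp [mul_comm]

lemma Q_count (t q : ℕ) (k : Fin q → ℕ) :
    2 * #(Qgraph t q k).edgeFinset =
      t * ((t + ∑ i, (2 * k i + 1)) - 1) + ∑ i, (2 * k i + 1) * (t + 2 * k i) := by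
  classical
  rw [← sum_degrees_eq_twice_card_edges, Fintype.sum_sum_type]
  congr 1
  · rw [Finset.sum_congr rfl (fun a _ => Q_deg_inl t q k a), Finset.sum_const, smul_eq_mul,
      card_univ, Fintype.card_fin]
  · rw [← Finset.univ_sigma_univ, Finset.sum_sigma]
    refine Finset.sum_congr rfl fun i _ => ?_
    rw [Finset.sum_congr rfl (fun x _ => Q_deg_inr t q k i x), Finset.sum_const, smul_eq_mul,
      card_univ, Fintype.card_fin]

lemma two_mul_choose_two (m : ℕ) : 2 * Nat.choose m 2 = m * (m - 1) := by
  rw [Nat.choose_two_right, Nat.mul_div_cancel']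
  rcases m with _ | m
  · simp
  · simpa [Nat.succ_sub_one, mul_comm] using even_iff_two_dvd.mp (Nat.even_mul_succ_self m)

end StmtAux

open StmtAux Finset in
theorem stmt_3 (n s t q : ℕ) (hs : 1 ≤ s) (ht : t ≤ s + 1) (k : Fin q → ℕ)
    (hmono : Antitone k) (hsum : t + ∑ i, k i = s + 1)
    (hn : n = t + ∑ i, (2 * k i + 1)) :
    (Qgraph t q k).edgeSet.ncard ≤
      Nat.choose n 2 - Nat.choose (n - t) 2 + Nat.choose (2 * s + 3 - 2 * t) 2 ∧
    (joinGraph t (2 * s + 3 - 2 * t) n).edgeSet.ncard =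
      Nat.choose n 2 - Nat.choose (n - t) 2 + Nat.choose (2 * s + 3 - 2 * t) 2 := by
  classical
  set K := ∑ i, k i with hK
  set S := ∑ i, k i * (2 * k i + 1) with hSdef
  set a := 2 * s + 3 - 2 * t with ha
  have hKs : t + K = s + 1 := hsum
  have hN : ∑ i, (2 * k i + 1) = 2 * K + q := by
    rw [Finset.sum_add_distrib, ← Finset.mul_sum, ← hK]
    simp [Finset.card_univ]
  have hnv : n = t + (2 * K + q) := by rw [hn, hN]
  have hav : a = 2 * K + 1 := by omega
  have htn : t ≤ n := by omega
  -- abbreviations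
  set A := Nat.choose n 2 with hA
  set B := Nat.choose (n - t) 2 with hB
  set Cc := Nat.choose a 2 with hCc
  have h2A : 2 * A = n * (n - 1) := two_mul_choose_two n
  have h2B : 2 * B = (n - t) * (n - t - 1) := two_mul_choose_two (n - t)
  have h2C : 2 * Cc = a * (a - 1) := two_mul_choose_two a
  have hBA : B ≤ A := Nat.choose_le_choose 2 (by omega)
  have hnt : n - t = 2 * K + q := by omega
  -- key polynomial identity
  have key : n * (n - 1) = t * (n - 1) + t * (n - t) + (n - t) * (n - t - 1) := by
    rcases Nat.exists_eq_add_of_le htn with ⟨d, rfl⟩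
    rcases d with _ | e
    · simp
    · have e1 : t + (e + 1) - 1 = t + e := by omega
      have e2 : t + (e + 1) - t = e + 1 := by omega
      have e3 : t + (e + 1) - t - 1 = e := by omega
      rw [e1, e3, e2]
      ring
  -- sum manipulations for Q
  have hQsum : ∑ i, (2 * k i + 1) * (t + 2 * k i) = t * (2 * K + q) + 2 * S := by
    have : ∀ i ∈ (univ : Finset (Fin q)),
        (2 * k i + 1) * (t + 2 * k i) = t * (2 * k i + 1) + 2 * (k i * (2 * k i + 1)) := by
      intro i _; ring
    rw [Finset.sum_congr rfl this, Finset.sum_add_distrib, ← Finset.mul_sum, ← Finset.mul_sum,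
      hN, ← hSdef]
  have hS : S ≤ K * (2 * K + 1) := by
    have : ∀ i ∈ (univ : Finset (Fin q)), k i * (2 * k i + 1) ≤ k i * (2 * K + 1) := by
      intro i _
      have : k i ≤ K := Finset.single_le_sum (fun j _ => Nat.zero_le (k j)) (Finset.mem_univ i)
      exact Nat.mul_le_mul_left _ (by omega)
    calc S ≤ ∑ i, k i * (2 * K + 1) := Finset.sum_le_sum this
    _ = K * (2 * K + 1) := by rw [← Finset.sum_mul]
  have hQ2 : 2 * #(Qgraph t q k).edgeFinset = t * (n - 1) + (t * (2 * K + q) + 2 * S) := by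
    rw [Q_count, hQsum, ← hn]
  -- Q part
  have hQle : #(Qgraph t q k).edgeFinset + B ≤ A + Cc := by
    have h2 : 2 * (#(Qgraph t q k).edgeFinset + B) ≤ 2 * (A + Cc) := by
      have e1 : a * (a - 1) = 2 * (K * (2 * K + 1)) := by
        rw [hav, Nat.add_sub_cancel]; ring
      have e2 : t * (n - t) = t * (2 * K + q) := by rw [hnt]
      linarith [hQ2, h2A, h2B, h2C, key, hS, e1, e2]
    omega
  constructor
  · rw [Set.ncard_eq_toFinset_card']
    have : (Qgraph t q k).edgeSet.toFinset = (Qgraph t q k).edgeFinset := rfl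
    rw [this]
    omega
  · -- join part
    have hJ := join_count t a n htn
    have hJeq : #(joinGraph t a n).edgeFinset + B = A + Cc := by
      rcases Nat.eq_zero_or_pos q with hq0 | hq1
      · -- q = 0 : K = 0, n = t
        have hK0 : K = 0 := by
          rw [hK]
          have : (univ : Finset (Fin q)) = ∅ := by
            rw [Finset.univ_eq_empty_iff, hq0]; infer_instance
          rw [this, Finset.sum_empty]
        rw [show min (t + a) n = t by omega, Nat.sub_self, zero_mul,
          show n - t = 0 by omega, zero_mul, add_zero, add_zero] at hJ
        have hEA : 2 * #(joinGraph t a n).edgeFinset = 2 * A := by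
          rw [hJ, h2A, show n = t by omega]
        have hB0 : 2 * B = 0 := by
          rw [h2B, show n - t = 0 by omega, zero_mul]
        have hC0 : 2 * Cc = 0 := by
          rw [h2C, show a = 1 by omega]
        omega
      · -- q ≥ 1 : min (t+a) n = t + a
        have hMv : min (t + a) n = t + a := by omega
        rw [hMv] at hJ
        have e1 : t + a - t = 2 * K + 1 := by omega
        have e2 : t + a - 1 = t + 2 * K := by omega
        obtain ⟨r, hqr⟩ : ∃ r, q = r + 1 := ⟨q - 1, by omega⟩
        have e3 : n - (t + a) = r := by omega
        rw [e1, e2, e3] at hJ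
        have h2 : 2 * (#(joinGraph t a n).edgeFinset + B) = 2 * (A + Cc) := by
          have e4 : a * (a - 1) = (2 * K + 1) * (2 * K) := by
            rw [hav, Nat.add_sub_cancel]
          have e6 : t * (n - t) = (2 * K + 1) * t + r * t := by
            rw [hnt, hqr]; ring
          have e7 : (2 * K + 1) * (t + 2 * K) = (2 * K + 1) * t + (2 * K + 1) * (2 * K) := by
            ring
          linarith [hJ, h2A, h2B, h2C, key, e4, e6, e7]
        omega
    rw [Set.ncard_eq_toFinset_card']
    have : (joinGraph t a n).edgeSet.toFinset = (joinGraph t a n).edgeFinset := rfl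
    rw [this]
    omega
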